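/- Let f, σ, τ be as in the context. (i) If ρ_0 ∈ [0,σ] and ρ̂ ∈ (τ(ρ_0), 1], then ρ_0 < ρ̂ and f(ρ̂) < f(ρ_0); in particular the shock speed (f(ρ̂) − f(ρ_0))/(ρ̂ − ρ_0) is strictly negative. (ii) If ρ_0 ∈ [σ,1] and ρ̂ ∈ [0, τ(ρ_0)), then ρ̂ < ρ_0 and f(ρ̂) < f(ρ_0); in particular the shock speed (f(ρ_0) − f(ρ̂))/(ρ_0 − ρ̂) is strictly positive. -/

import Mathlib

open Set

/-- Admissibility conditions (3.4)–(3.5): waves produced by the Riemann solver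
travel with negative speed on incoming roads and positive speed on outgoing
roads. -/
theorem stmt9 (f : ℝ → ℝ) (σ : ℝ) (τ : ℝ → ℝ)
    (hf_cont : ContinuousOn f (Icc 0 1))
    (hf_conc : StrictConcaveOn ℝ (Icc 0 1) f)
    (hf0 : f 0 = 0) (hf1 : f 1 = 0)
    (hσ : σ ∈ Ioo (0 : ℝ) 1)
    (hσmax : ∀ x ∈ Icc (0 : ℝ) 1, f x ≤ f σ)
    (hτσ : τ σ = σ)
    (hτ : ∀ ρ ∈ Icc (0 : ℝ) 1, ρ ≠ σ →
      τ ρ ∈ Icc (0 : ℝ) 1 ∧ τ ρ ≠ ρ ∧ f (τ ρ) = f ρ) :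
    (∀ ρ₀ ∈ Icc (0 : ℝ) σ, ∀ ρh ∈ Ioc (τ ρ₀) 1,
      ρ₀ < ρh ∧ f ρh < f ρ₀ ∧ (f ρh - f ρ₀) / (ρh - ρ₀) < 0) ∧
    (∀ ρ₀ ∈ Icc σ (1 : ℝ), ∀ ρh ∈ Ico 0 (τ ρ₀),
      ρh < ρ₀ ∧ f ρh < f ρ₀ ∧ 0 < (f ρ₀ - f ρh) / (ρ₀ - ρh)) := by
  have hσIcc : σ ∈ Icc (0:ℝ) 1 := ⟨hσ.1.le, hσ.2.le⟩
  have humax : ∀ x ∈ Icc (0:ℝ) 1, x ≠ σ → f x < f σ := by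
    intro x hx hne
    rcases (hσmax x hx).lt_or_eq with h | h
    · exact h
    · exfalso
      have hm := hf_conc.2 hx hσIcc hne (by norm_num : (0:ℝ) < 1/2)
        (by norm_num : (0:ℝ) < 1/2) (by norm_num)
      have hmem : (1/2:ℝ) • x + (1/2:ℝ) • σ ∈ Icc (0:ℝ) 1 :=
        hf_conc.1 hx hσIcc (by norm_num) (by norm_num) (by norm_num)
      have h2 := hσmax _ hmem
      simp only [smul_eq_mul] at hm h2
      linarith
  have hmonoL : ∀ x y : ℝ, 0 ≤ x → x < y → y ≤ σ → f x < f y := by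
    intro x y hx0 hxy hyσ
    rcases eq_or_lt_of_le hyσ with rfl | hlt
    · exact humax x ⟨hx0, (hxy.trans_le hσ.2.le).le⟩ hxy.ne
    · have hxIcc : x ∈ Icc (0:ℝ) 1 := ⟨hx0, ((hxy.trans hlt).trans hσ.2).le⟩
      have hxσ : x ≠ σ := (hxy.trans hlt).ne
      have hσx : 0 < σ - x := by linarith
      have ha0 : 0 < (σ - y)/(σ - x) := div_pos (by linarith) hσx
      have hb0 : 0 < (y - x)/(σ - x) := div_pos (by linarith) hσx
      have hab : (σ - y)/(σ - x) + (y - x)/(σ - x) = 1 := by field_simp; ring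
      have hcc := hf_conc.2 hxIcc hσIcc hxσ ha0 hb0 hab
      have hcomb : ((σ - y)/(σ - x)) • x + ((y - x)/(σ - x)) • σ = y := by
        simp only [smul_eq_mul]; field_simp; ring
      rw [hcomb] at hcc
      simp only [smul_eq_mul] at hcc
      have hmax := hσmax x hxIcc
      have hx' : (σ - y)/(σ - x) * f x + (y - x)/(σ - x) * f x = f x := by
        rw [← add_mul, hab, one_mul]
      nlinarith [mul_nonneg hb0.le (sub_nonneg.mpr hmax)]
  have hmonoR : ∀ x y : ℝ, σ ≤ x → x < y → y ≤ 1 → f y < f x := by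
    intro x y hσx hxy hy1
    rcases eq_or_lt_of_le hσx with rfl | hlt
    · exact humax y ⟨(hσ.1.trans hxy).le, hy1⟩ hxy.ne'
    · have hyIcc : y ∈ Icc (0:ℝ) 1 := ⟨(hσ.1.trans (hlt.trans hxy)).le, hy1⟩
      have hyσ : σ ≠ y := (hlt.trans hxy).ne
      have hyx : 0 < y - σ := by linarith
      have ha0 : 0 < (y - x)/(y - σ) := div_pos (by linarith) hyx
      have hb0 : 0 < (x - σ)/(y - σ) := div_pos (by linarith) hyx
      have hab : (y - x)/(y - σ) + (x - σ)/(y - σ) = 1 := by field_simp; ring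
      have hcc := hf_conc.2 hσIcc hyIcc hyσ ha0 hb0 hab
      have hcomb : ((y - x)/(y - σ)) • σ + ((x - σ)/(y - σ)) • y = x := by
        simp only [smul_eq_mul]; field_simp; ring
      rw [hcomb] at hcc
      simp only [smul_eq_mul] at hcc
      have hmax := hσmax y hyIcc
      have hy' : (y - x)/(y - σ) * f y + (x - σ)/(y - σ) * f y = f y := by
        rw [← add_mul, hab, one_mul]
      nlinarith [mul_nonneg ha0.le (sub_nonneg.mpr hmax)]
  constructor
  · intro ρ₀ hρ₀ ρh hρh
    have hρ₀Icc : ρ₀ ∈ Icc (0:ℝ) 1 := ⟨hρ₀.1, hρ₀.2.trans hσ.2.le⟩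
    rcases eq_or_lt_of_le hρ₀.2 with rfl | hρ₀σ
    · rw [hτσ] at hρh
      have h1 : ρ₀ < ρh := hρh.1
      have h2 : f ρh < f ρ₀ := hmonoR ρ₀ ρh le_rfl h1 hρh.2
      exact ⟨h1, h2, div_neg_of_neg_of_pos (by linarith) (by linarith)⟩
    · obtain ⟨hτIcc, hτne, hτf⟩ := hτ ρ₀ hρ₀Icc hρ₀σ.ne
      have hτσ' : σ < τ ρ₀ := by
        by_contra h
        push_neg at h
        rcases lt_trichotomy (τ ρ₀) ρ₀ with hc | hc | hc
        · exact absurd hτf (hmonoL _ _ hτIcc.1 hc hρ₀.2).ne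
        · exact hτne hc
        · exact absurd hτf.symm (hmonoL _ _ hρ₀.1 hc h).ne
      have h1 : ρ₀ < ρh := lt_trans (hρ₀σ.trans hτσ') hρh.1
      have h2 : f ρh < f ρ₀ := by
        have := hmonoR (τ ρ₀) ρh hτσ'.le hρh.1 hρh.2
        rwa [hτf] at this
      exact ⟨h1, h2, div_neg_of_neg_of_pos (by linarith) (by linarith)⟩
  · intro ρ₀ hρ₀ ρh hρh
    have hρ₀Icc : ρ₀ ∈ Icc (0:ℝ) 1 := ⟨hσ.1.le.trans hρ₀.1, hρ₀.2⟩
    rcases eq_or_lt_of_le hρ₀.1 with rfl | hρ₀σ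
    · rw [hτσ] at hρh
      have h1 : ρh < σ := hρh.2
      have h2 : f ρh < f σ := hmonoL ρh σ hρh.1 h1 le_rfl
      exact ⟨h1, h2, div_pos (by linarith) (by linarith)⟩
    · obtain ⟨hτIcc, hτne, hτf⟩ := hτ ρ₀ hρ₀Icc hρ₀σ.ne'
      have hτσ' : τ ρ₀ < σ := by
        by_contra h
        push_neg at h
        rcases lt_trichotomy (τ ρ₀) ρ₀ with hc | hc | hc
        · exact absurd hτf (hmonoR _ _ h hc hρ₀.2).ne'
        · exact hτne hc
        · exact absurd hτf.symm (hmonoR _ _ hρ₀.1 hc hτIcc.2).ne'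
      have h1 : ρh < ρ₀ := hρh.2.trans (hτσ'.trans hρ₀σ)
      have h2 : f ρh < f ρ₀ := by
        have := hmonoL ρh (τ ρ₀) hρh.1 hρh.2 hτσ'.le
        rwa [hτf] at this
      exact ⟨h1, h2, div_pos (by linarith) (by linarith)⟩
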